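/- Let p ≥ 5 be a prime with p ≡ 3 mod 4 and δ an integer not divisible by p. Then there is no x with 1 ≤ x ≤ (p-1)/2 such that p divides δ²x²+4, the number of such x with (δ²x²+4/p) = +1 is (p-3)/4, and the number with (δ²x²+4/p) = -1 is (p+1)/4. -/

import Mathlib

open Finset

lemma qsum1 (p : ℕ) [hp : Fact p.Prime] (hp5 : 5 ≤ p) :
    ∑ a : ZMod p, quadraticChar (ZMod p) a * quadraticChar (ZMod p) (a + 4) = -1 := by
  have hp2 : p ≠ 2 := by omega
  have hchar : ringChar (ZMod p) ≠ 2 := by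
    rw [ZMod.ringChar_zmod_n]; exact hp2
  have h4 : (4 : ZMod p) ≠ 0 := by
    have : ¬ ((4:ℕ) : ZMod p) = 0 := by
      rw [ZMod.natCast_eq_zero_iff]
      intro h
      have := Nat.le_of_dvd (by norm_num) h
      omega
    simpa using this
  have hn4 : (-4 : ZMod p) ≠ 0 := neg_ne_zero.mpr h4
  have h1 : (-1 : ZMod p) ≠ 0 := by
    simp only [neg_ne_zero]; exact one_ne_zero
  set χ := quadraticChar (ZMod p) with hχ
  have hχ1 : χ ≠ 1 := quadraticChar_ne_one hchar
  have hinv : χ⁻¹ = χ := (quadraticChar_isQuadratic (ZMod p)).inv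
  have hjac : jacobiSum χ χ = - χ (-1) := by
    have := jacobiSum_nontrivial_inv hχ1
    rwa [hinv] at this
  have key : ∑ x : ZMod p, χ (-4 * x) * χ (-4 * x + 4)
      = ∑ a : ZMod p, χ a * χ (a + 4) :=
    Fintype.sum_equiv (Equiv.mulLeft₀ (-4) hn4) _ _ (fun x => rfl)
  rw [← key]
  have step : ∀ x : ZMod p, χ (-4 * x) * χ (-4 * x + 4)
      = (χ (-4) * χ 4) * (χ x * χ (1 - x)) := by
    intro x
    have h2 : (-4 : ZMod p) * x + 4 = 4 * (1 - x) := by ring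
    rw [h2, map_mul, map_mul]
    ring
  rw [Finset.sum_congr rfl (fun x _ => step x), ← Finset.mul_sum]
  have : ∑ x : ZMod p, χ x * χ (1 - x) = jacobiSum χ χ := rfl
  rw [this, hjac]
  have hm : χ (-4) * χ 4 = χ (-1) := by
    have : (-4 : ZMod p) = -1 * 4 := by ring
    rw [this, map_mul, mul_assoc, ← map_mul]
    have : (4 : ZMod p) * 4 = 4 ^ 2 := by ring
    rw [this, quadraticChar_sq_one' h4, mul_one]
  rw [hm]
  have := quadraticChar_sq_one h1
  rw [hχ] at *
  nlinarith [this]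

lemma qsumT (p : ℕ) [hp : Fact p.Prime] (hp5 : 5 ≤ p) :
    ∑ z : ZMod p, quadraticChar (ZMod p) (z ^ 2 + 4) = -1 := by
  have hp2 : p ≠ 2 := by omega
  have hchar : ringChar (ZMod p) ≠ 2 := by
    rw [ZMod.ringChar_zmod_n]; exact hp2
  set χ := quadraticChar (ZMod p) with hχ
  have fib : ∑ z : ZMod p, χ (z ^ 2 + 4)
      = ∑ a : ZMod p, ∑ z ∈ Finset.univ.filter (fun z : ZMod p => z ^ 2 = a), χ (z ^ 2 + 4) :=
    (Finset.sum_fiberwise _ _ _).symm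
  have inner : ∀ a : ZMod p,
      ∑ z ∈ Finset.univ.filter (fun z : ZMod p => z ^ 2 = a), χ (z ^ 2 + 4)
      = (χ a + 1) * χ (a + 4) := by
    intro a
    have h1 : ∑ z ∈ Finset.univ.filter (fun z : ZMod p => z ^ 2 = a), χ (z ^ 2 + 4)
        = ∑ _z ∈ Finset.univ.filter (fun z : ZMod p => z ^ 2 = a), χ (a + 4) := by
      apply Finset.sum_congr rfl
      intro z hz
      rw [Finset.mem_filter] at hz
      rw [hz.2]
    rw [h1, Finset.sum_const, nsmul_eq_mul]
    congr 1
    have := quadraticChar_card_sqrts hchar a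
    have hset : {x : ZMod p | x ^ 2 = a}.toFinset
        = Finset.univ.filter (fun z : ZMod p => z ^ 2 = a) := by
      ext x; simp
    rw [hset] at this
    exact_mod_cast this
  rw [fib, Finset.sum_congr rfl (fun a _ => inner a)]
  have expand : ∀ a : ZMod p, (χ a + 1) * χ (a + 4) = χ a * χ (a + 4) + χ (a + 4) := by
    intro a; ring
  rw [Finset.sum_congr rfl (fun a _ => expand a), Finset.sum_add_distrib]
  have h2 : ∑ a : ZMod p, χ (a + 4) = 0 := by
    have := Fintype.sum_equiv (Equiv.addRight (4 : ZMod p)) (fun a => χ (a + 4)) (fun a => χ a) (fun a => rfl)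
    rw [this]
    exact quadraticChar_sum_zero hchar
  rw [h2, add_zero, qsum1 p hp5]

lemma sumIcc (p : ℕ) [hp : Fact p.Prime] (hp5 : 5 ≤ p) (hp3 : p % 4 = 3)
    (c : ZMod p) (hc : c ≠ 0) :
    ∑ x ∈ Finset.Icc 1 ((p - 1) / 2),
      quadraticChar (ZMod p) ((c * (x : ZMod p)) ^ 2 + 4) = -1 := by
  have hp2 : p ≠ 2 := by omega
  obtain ⟨k, hk⟩ : ∃ k, p = 4 * k + 3 := ⟨p / 4, by omega⟩
  set m := (p - 1) / 2 with hm
  have hm' : p = 2 * m + 1 := by omega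
  set χ := quadraticChar (ZMod p) with hχ
  set f : ZMod p → ℤ := fun y => χ ((c * y) ^ 2 + 4) with hf
  have h2 : (2 : ZMod p) ≠ 0 := by
    have : ¬ ((2:ℕ) : ZMod p) = 0 := by
      rw [ZMod.natCast_eq_zero_iff]
      intro h; have := Nat.le_of_dvd (by norm_num) h; omega
    simpa using this
  -- total sum
  have htot : ∑ y : ZMod p, f y = -1 := by
    rw [Fintype.sum_equiv (Equiv.mulLeft₀ c hc) f (fun z => χ (z ^ 2 + 4)) (fun y => rfl)]
    exact qsumT p hp5
  -- the two images
  set s1 := (Finset.Icc 1 m).image (fun x : ℕ => (x : ZMod p)) with hs1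
  set s2 := (Finset.Icc 1 m).image (fun x : ℕ => -(x : ZMod p)) with hs2
  have hcast0 : ∀ x : ℕ, x ∈ Finset.Icc 1 m → ((x : ℕ) : ZMod p) ≠ 0 := by
    intro x hx
    rw [Finset.mem_Icc] at hx
    rw [Ne, ZMod.natCast_eq_zero_iff]
    intro h
    have := Nat.le_of_dvd (by omega) h
    omega
  have hinj : ∀ x ∈ Finset.Icc 1 m, ∀ y ∈ Finset.Icc 1 m,
      ((x : ℕ) : ZMod p) = ((y : ℕ) : ZMod p) → x = y := by
    intro x hx y hy h
    rw [Finset.mem_Icc] at hx hy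
    have hx' : x < p := by omega
    have hy' : y < p := by omega
    have := congrArg ZMod.val h
    rwa [ZMod.val_cast_of_lt hx', ZMod.val_cast_of_lt hy'] at this
  have hdisj : Disjoint s1 s2 := by
    rw [Finset.disjoint_left]
    intro a ha1 ha2
    rw [hs1, Finset.mem_image] at ha1
    rw [hs2, Finset.mem_image] at ha2
    obtain ⟨x, hx, hxa⟩ := ha1
    obtain ⟨y, hy, hya⟩ := ha2
    rw [Finset.mem_Icc] at hx hy
    have : ((x + y : ℕ) : ZMod p) = 0 := by
      push_cast
      rw [hxa, ← hya]; ring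
    rw [ZMod.natCast_eq_zero_iff] at this
    have := Nat.le_of_dvd (by omega) this
    omega
  have hunion : s1 ∪ s2 = Finset.univ.erase (0 : ZMod p) := by
    apply Finset.ext
    intro a
    constructor
    · intro ha
      rw [Finset.mem_union] at ha
      rw [Finset.mem_erase]
      refine ⟨?_, Finset.mem_univ a⟩
      rcases ha with ha | ha
      · rw [hs1, Finset.mem_image] at ha
        obtain ⟨x, hx, hxa⟩ := ha
        rw [← hxa]; exact hcast0 x hx
      · rw [hs2, Finset.mem_image] at ha
        obtain ⟨x, hx, hxa⟩ := ha
        rw [← hxa]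
        exact neg_ne_zero.mpr (hcast0 x hx)
    · intro ha
      rw [Finset.mem_erase] at ha
      have hv0 : a.val ≠ 0 := by
        rw [Ne, ZMod.val_eq_zero]; exact ha.1
      have hvp : a.val < p := ZMod.val_lt a
      have hva : ((a.val : ℕ) : ZMod p) = a := ZMod.natCast_rightInverse a
      rw [Finset.mem_union]
      by_cases hle : a.val ≤ m
      · left
        rw [hs1, Finset.mem_image]
        exact ⟨a.val, Finset.mem_Icc.mpr ⟨by omega, hle⟩, hva⟩
      · right
        rw [hs2, Finset.mem_image]
        refine ⟨p - a.val, Finset.mem_Icc.mpr ⟨by omega, by omega⟩, ?_⟩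
        have : ((p - a.val : ℕ) : ZMod p) = -a := by
          have hsub : (((p - a.val : ℕ) : ℤ) : ZMod p) = ((p : ℤ) : ZMod p) - ((a.val : ℤ) : ZMod p) := by
            rw [← Int.cast_sub]
            congr 1
            omega
          push_cast at hsub ⊢
          rw [hsub, ZMod.natCast_self] at *
          rw [hva] at *
          simpa using hsub
        rw [this, neg_neg]
  have hs1sum : ∑ y ∈ s1, f y = ∑ x ∈ Finset.Icc 1 m, f ((x : ZMod p)) :=
    Finset.sum_image hinj
  have hs2sum : ∑ y ∈ s2, f y = ∑ x ∈ Finset.Icc 1 m, f ((x : ZMod p)) := by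
    rw [hs2, Finset.sum_image (fun x hx y hy h => hinj x hx y hy (neg_injective h))]
    apply Finset.sum_congr rfl
    intro x _
    simp only [hf]
    ring_nf
  have hf0 : f 0 = 1 := by
    have h4 : (c * (0 : ZMod p)) ^ 2 + 4 = (2 : ZMod p) ^ 2 := by ring
    rw [hf]
    simp only []
    rw [h4]
    exact quadraticChar_sq_one' h2
  have key : (-1 : ℤ) = f 0 + (∑ y ∈ s1, f y + ∑ y ∈ s2, f y) := by
    rw [← htot, ← Finset.sum_union hdisj, hunion,
      ← Finset.add_sum_erase _ f (Finset.mem_univ (0 : ZMod p))]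
  rw [hf0, hs1sum, hs2sum] at key
  have : ∑ x ∈ Finset.Icc 1 m, f ((x : ZMod p)) =
      ∑ x ∈ Finset.Icc 1 m, χ ((c * (x : ZMod p)) ^ 2 + 4) := rfl
  rw [this] at key
  linarith

open Finset in
theorem stmt_6 (p : ℕ) (hp : p.Prime) (hp5 : 5 ≤ p) (hp3 : p % 4 = 3)
    (δ : ℤ) (hδ : ¬ (p : ℤ) ∣ δ) :
    (¬ ∃ x : ℕ, 1 ≤ x ∧ x ≤ (p - 1) / 2 ∧ (p : ℤ) ∣ δ ^ 2 * (x : ℤ) ^ 2 + 4) ∧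
    ((Finset.Icc 1 ((p - 1) / 2)).filter
        fun x : ℕ => @legendreSym p ⟨hp⟩ (δ ^ 2 * (x : ℤ) ^ 2 + 4) = 1).card = (p - 3) / 4 ∧
    ((Finset.Icc 1 ((p - 1) / 2)).filter
        fun x : ℕ => @legendreSym p ⟨hp⟩ (δ ^ 2 * (x : ℤ) ^ 2 + 4) = -1).card = (p + 1) / 4 := by
  haveI : Fact p.Prime := ⟨hp⟩
  obtain ⟨k, hk⟩ : ∃ k, p = 4 * k + 3 := ⟨p / 4, by omega⟩
  set m := (p - 1) / 2 with hm
  have h2 : (2 : ZMod p) ≠ 0 := by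
    have : ¬ ((2:ℕ) : ZMod p) = 0 := by
      rw [ZMod.natCast_eq_zero_iff]
      intro h; have := Nat.le_of_dvd (by norm_num) h; omega
    simpa using this
  set c : ZMod p := (δ : ZMod p) with hc
  have hc0 : c ≠ 0 := by
    rw [hc, Ne, ZMod.intCast_zmod_eq_zero_iff_dvd]
    exact hδ
  have hcastval : ∀ x : ℕ, ((δ ^ 2 * (x : ℤ) ^ 2 + 4 : ℤ) : ZMod p)
      = (c * (x : ZMod p)) ^ 2 + 4 := by
    intro x
    push_cast
    ring
  -- Part 1: no root
  have hnoroot : ∀ x : ℕ, ¬ (p : ℤ) ∣ δ ^ 2 * (x : ℤ) ^ 2 + 4 := by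
    intro x hdvd
    rw [← ZMod.intCast_zmod_eq_zero_iff_dvd, hcastval] at hdvd
    have hsq : (c * (x : ZMod p)) ^ 2 = -4 := by linear_combination hdvd
    have : IsSquare (-1 : ZMod p) := by
      refine ⟨c * (x : ZMod p) * 2⁻¹, ?_⟩
      have h4 : (-4 : ZMod p) * (2⁻¹ * 2⁻¹) = -1 := by
        field_simp
        ring
      calc (-1 : ZMod p) = (c * (x : ZMod p)) ^ 2 * (2⁻¹ * 2⁻¹) := by rw [hsq, h4]
        _ = c * (x : ZMod p) * 2⁻¹ * (c * (x : ZMod p) * 2⁻¹) := by ring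
    rw [ZMod.exists_sq_eq_neg_one_iff] at this
    exact this hp3
  have part1 : ¬ ∃ x : ℕ, 1 ≤ x ∧ x ≤ m ∧ (p : ℤ) ∣ δ ^ 2 * (x : ℤ) ^ 2 + 4 := by
    rintro ⟨x, _, _, hdvd⟩
    exact hnoroot x hdvd
  refine ⟨part1, ?_⟩
  -- the legendre symbol as character
  set f : ℕ → ℤ := fun x => @legendreSym p ⟨hp⟩ (δ ^ 2 * (x : ℤ) ^ 2 + 4) with hfdef
  have hfval : ∀ x : ℕ, f x = quadraticChar (ZMod p) ((c * (x : ZMod p)) ^ 2 + 4) := by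
    intro x
    rw [hfdef]
    simp only [legendreSym]
    rw [hcastval]
  have hdich : ∀ x : ℕ, f x = 1 ∨ f x = -1 := by
    intro x
    rw [hfval]
    apply quadraticChar_dichotomy
    rw [← hcastval, Ne, ZMod.intCast_zmod_eq_zero_iff_dvd]
    exact hnoroot x
  set s := Finset.Icc 1 m with hs
  set A := s.filter (fun x => f x = 1) with hA
  set B := s.filter (fun x => f x = -1) with hB
  have hBalt : B = s.filter (fun x => ¬ f x = 1) := by
    rw [hB]
    apply Finset.filter_congr
    intro x _
    rcases hdich x with h | h <;> simp [h]
  have hcards : A.card + B.card = m := by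
    rw [hA, hBalt, Finset.card_filter_add_card_filter_not, Nat.card_Icc]
    omega
  have hsumf : ∑ x ∈ s, f x = -1 := by
    rw [Finset.sum_congr rfl (fun x _ => hfval x)]
    exact sumIcc p hp5 hp3 c hc0
  have hsplit : ∑ x ∈ s, f x = (A.card : ℤ) - (B.card : ℤ) := by
    rw [← Finset.sum_filter_add_sum_filter_not s (fun x => f x = 1), ← hA, ← hBalt]
    have h1 : ∑ x ∈ A, f x = (A.card : ℤ) := by
      rw [Finset.sum_congr rfl (fun x hx => (Finset.mem_filter.mp hx).2)]
      simp
      rfl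
    have h2' : ∑ x ∈ B, f x = -(B.card : ℤ) := by
      rw [Finset.sum_congr rfl (fun x hx => (Finset.mem_filter.mp hx).2)]
      simp
      rfl
    rw [h1, h2']
    ring
  rw [hsplit] at hsumf
  have hAcard : A.card = k := by omega
  have hBcard : B.card = k + 1 := by omega
  exact ⟨by rw [hAcard]; omega, by rw [hBcard]; omega⟩
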